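/- Let α₁, α₂ be two real numbers of the same sign (α₁α₂ > 0) with α₁ ≠ α₂, and let G : ℝ² → ℝ² be the semi-skew linear operator G(x₁, x₂) := (α₂x₂, −α₁x₁). Then the equation C = (GC)° has no solution C ⊆ ℝ² that is bounded and contains 0 in its interior. -/

import Mathlib

theorem aux_unbounded {C : Set (ℝ × ℝ)} {R t v : ℝ} (ht : 1 < t) (hv : 0 < v)
    (hR : ∀ x ∈ C, ‖x‖ ≤ R) (hmem : ∀ n : ℕ, ∃ x ∈ C, t ^ n * v ≤ ‖x‖) : False := by
  obtain ⟨n, hn⟩ := pow_unbounded_of_one_lt (R / v) ht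
  obtain ⟨x, hx, hnx⟩ := hmem n
  have h1 := hR x hx
  have h2 : R < t ^ n * v := by
    rw [div_lt_iff₀ hv] at hn
    linarith
  linarith

/-- Let `α₁, α₂` be nonzero real numbers of the same sign with `α₁ ≠ α₂`, and let
`G(x₁, x₂) := (α₂x₂, −α₁x₁)` be the associated semi-skew operator on `ℝ²` (with the
standard Euclidean inner product). Then the equation `C = (GC)°` has no solution
`C ⊆ ℝ²` that is bounded and contains `0` in its interior. -/
theorem stmt19 (α₁ α₂ : ℝ) (hsign : 0 < α₁ * α₂) (hne : α₁ ≠ α₂)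
    (G : ℝ × ℝ → ℝ × ℝ) (hG : ∀ p : ℝ × ℝ, G p = (α₂ * p.2, -(α₁ * p.1))) :
    ¬ ∃ C : Set (ℝ × ℝ), Bornology.IsBounded C ∧ (0 : ℝ × ℝ) ∈ interior C ∧
      C = {y : ℝ × ℝ | ∀ c ∈ C, y.1 * (G c).1 + y.2 * (G c).2 ≤ 1} := by
  rintro ⟨C, hB, h0, hC⟩
  have hα₁ : α₁ ≠ 0 := by rintro rfl; simp at hsign
  have hα₂ : α₂ ≠ 0 := by rintro rfl; simp at hsign
  -- membership characterization
  have hmem : ∀ y : ℝ × ℝ, y ∈ C ↔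
      ∀ c ∈ C, y.1 * (α₂ * c.2) + y.2 * (-(α₁ * c.1)) ≤ 1 := by
    intro y
    conv_lhs => rw [hC]
    simp only [Set.mem_setOf_eq, hG]
  -- the key invariance step
  have step : ∀ y ∈ C, ((-(α₁ / α₂)) * y.1, (-(α₂ / α₁)) * y.2) ∈ C := by
    intro y hy
    rw [hmem]
    intro c hc
    have h1 := (hmem c).mp hc y hy
    calc (-(α₁ / α₂) * y.1) * (α₂ * c.2) + (-(α₂ / α₁) * y.2) * (-(α₁ * c.1))
        = c.1 * (α₂ * y.2) + c.2 * (-(α₁ * y.1)) := by field_simp; ring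
      _ ≤ 1 := h1
  -- iterate
  have iter : ∀ p ∈ C, ∀ n : ℕ,
      ((-(α₁ / α₂)) ^ n * p.1, (-(α₂ / α₁)) ^ n * p.2) ∈ C := by
    intro p hp n
    induction n with
    | zero => simpa using hp
    | succ n ih =>
      have h := step _ ih
      convert h using 2 <;> ring
  -- bound
  obtain ⟨R, hR⟩ := hB.exists_norm_le
  -- small ball
  obtain ⟨ε, hε, hball⟩ := Metric.isOpen_iff.mp isOpen_interior 0 h0
  have hsub : Metric.ball (0 : ℝ × ℝ) ε ⊆ C := hball.trans interior_subset
  have hμpos : 0 < α₁ / α₂ := by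
    have h2 : α₁ / α₂ = (α₁ * α₂) / α₂ ^ 2 := by field_simp
    rw [h2]; positivity
  have hνpos : 0 < α₂ / α₁ := by
    have h2 : α₂ / α₁ = (α₁ * α₂) / α₁ ^ 2 := by field_simp
    rw [h2]; positivity
  have hμne : α₁ / α₂ ≠ 1 := by
    intro h
    apply hne
    field_simp at h
    exact h
  have hεhalf : 0 < ε / 2 := by linarith
  rcases lt_or_gt_of_ne hμne with hlt | hgt
  · -- α₁/α₂ < 1, so α₂/α₁ > 1, blow up second coordinate from (0, ε/2)
    have hν : 1 < α₂ / α₁ := by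
      have h3 : α₂ / α₁ = (α₁ / α₂)⁻¹ := by
        rw [inv_div]
      rw [h3]
      exact (one_lt_inv_iff₀).mpr ⟨hμpos, hlt⟩
    have hp : ((0 : ℝ), ε / 2) ∈ C := by
      apply hsub
      rw [Metric.mem_ball, Prod.dist_eq]
      simp only [Prod.fst_zero, Prod.snd_zero, Real.dist_eq, sub_zero, abs_zero]
      rw [abs_of_pos hεhalf]
      simp only [max_lt_iff]
      constructor <;> linarith
    refine aux_unbounded hν hεhalf hR fun n => ?_
    refine ⟨_, iter _ hp n, ?_⟩
    have h4 : ((-(α₁ / α₂)) ^ n * (0:ℝ), (-(α₂ / α₁)) ^ n * (ε / 2)).2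
        = (-(α₂ / α₁)) ^ n * (ε / 2) := rfl
    calc (α₂ / α₁) ^ n * (ε / 2) = |(-(α₂ / α₁)) ^ n * (ε / 2)| := by
          rw [abs_mul, abs_pow, abs_neg, abs_of_pos hνpos, abs_of_pos hεhalf]
      _ ≤ ‖((-(α₁ / α₂)) ^ n * (0:ℝ), (-(α₂ / α₁)) ^ n * (ε / 2))‖ := by
          rw [← Real.norm_eq_abs, ← h4]
          exact norm_snd_le _
  · -- α₁/α₂ > 1, blow up first coordinate from (ε/2, 0)
    have hp : ((ε / 2 : ℝ), (0 : ℝ)) ∈ C := by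
      apply hsub
      rw [Metric.mem_ball, Prod.dist_eq]
      simp only [Prod.fst_zero, Prod.snd_zero, Real.dist_eq, sub_zero, abs_zero]
      rw [abs_of_pos hεhalf]
      simp only [max_lt_iff]
      constructor <;> linarith
    refine aux_unbounded hgt hεhalf hR fun n => ?_
    refine ⟨_, iter _ hp n, ?_⟩
    have h4 : ((-(α₁ / α₂)) ^ n * (ε / 2), (-(α₂ / α₁)) ^ n * (0:ℝ)).1
        = (-(α₁ / α₂)) ^ n * (ε / 2) := rfl
    calc (α₁ / α₂) ^ n * (ε / 2) = |(-(α₁ / α₂)) ^ n * (ε / 2)| := by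
          rw [abs_mul, abs_pow, abs_neg, abs_of_pos hμpos, abs_of_pos hεhalf]
      _ ≤ ‖((-(α₁ / α₂)) ^ n * (ε / 2), (-(α₂ / α₁)) ^ n * (0:ℝ))‖ := by
          rw [← Real.norm_eq_abs, ← h4]
          exact norm_fst_le _
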